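/- Let G be a connected unicyclic graph on n vertices that has a vertex of degree at least 3 not lying on the unique cycle of G. Then no enumeration of the edge-binomials of G forms a d-sequence in S; that is, the edge-binomials of G do not form a d-sequence. -/

import Mathlib

open MvPolynomial

/-- The edge-binomial `f_{ij} = x_i * y_j - x_j * y_i` in
`S = k[x_1,…,x_n,y_1,…,y_n]`, realized as `MvPolynomial (Fin n ⊕ Fin n) k`
with `x_i = X (Sum.inl i)` and `y_i = X (Sum.inr i)`. -/
noncomputable def edgeBinomial (k : Type) [Field k] {n : ℕ} (i j : Fin n) :
    MvPolynomial (Fin n ⊕ Fin n) k :=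
  X (Sum.inl i) * X (Sum.inr j) - X (Sum.inl j) * X (Sum.inr i)

/-- The parity edge-binomial `g_{ij} = x_i * x_j - y_i * y_j`. -/
noncomputable def parityBinomial (k : Type) [Field k] {n : ℕ} (i j : Fin n) :
    MvPolynomial (Fin n ⊕ Fin n) k :=
  X (Sum.inl i) * X (Sum.inl j) - X (Sum.inr i) * X (Sum.inr j)

/-- `a 0, …, a (m-1)` is a d-sequence: it is a minimal system of generators of the
ideal it generates, and `((a_0,…,a_{i-1}) : a_i * a_j) = ((a_0,…,a_{i-1}) : a_j)`
for all `i ≤ j`. -/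
def IsDSequence {R : Type*} [CommRing R] {m : ℕ} (a : Fin m → R) : Prop :=
  (∀ i : Fin m, a i ∉ Ideal.span (a '' {j | j ≠ i})) ∧
  ∀ i j : Fin m, i ≤ j →
    Submodule.colon (Ideal.span (a '' {l | l < i})) (Ideal.span {a i * a j}) =
      Submodule.colon (Ideal.span (a '' {l | l < i})) (Ideal.span {a j})

/-- `α, β : Fin N → Fin n` is an enumeration (with a choice of orientation) of the
edges of the graph `G`. -/
def IsEdgeEnumeration {n N : ℕ} (G : SimpleGraph (Fin n)) (α β : Fin N → Fin n) : Prop :=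
  (∀ t, G.Adj (α t) (β t)) ∧
  (∀ e ∈ G.edgeSet, ∃ t, e = s(α t, β t)) ∧
  Function.Injective (fun t => (s(α t, β t) : Sym2 (Fin n)))

/-- The edge-binomials of `G` form a d-sequence (for some enumeration of the edges). -/
def EdgeBinomialsFormDSequence (k : Type) [Field k] {n : ℕ} (G : SimpleGraph (Fin n)) : Prop :=
  ∃ (N : ℕ) (α β : Fin N → Fin n), IsEdgeEnumeration G α β ∧
    IsDSequence (fun t => edgeBinomial k (α t) (β t))

/-- The parity edge-binomials of `G` form a d-sequence. -/
def ParityBinomialsFormDSequence (k : Type) [Field k] {n : ℕ} (G : SimpleGraph (Fin n)) : Prop :=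
  ∃ (N : ℕ) (α β : Fin N → Fin n), IsEdgeEnumeration G α β ∧
    IsDSequence (fun t => parityBinomial k (α t) (β t))

/-- A graph is unicyclic if it contains exactly one cycle, i.e. there is a unique
set of edges which is the edge set of some cycle. -/
def IsUnicyclic {V : Type*} (G : SimpleGraph V) : Prop :=
  ∃! s : Set (Sym2 V), ∃ (v : V) (w : G.Walk v v), w.IsCycle ∧ s = {e | e ∈ w.edges}

/-- The degree of a vertex (number of neighbours). -/
noncomputable def degr {V : Type*} (G : SimpleGraph V) (v : V) : ℕ := (G.neighborSet v).ncard

/-- `H` belongs to the class `T_m` with center `k0`: `H` is a tree, the center has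
degree `m`, and every other vertex has degree at most `2`. -/
def IsTmTree {n : ℕ} (H : SimpleGraph (Fin n)) (m : ℕ) (k0 : Fin n) : Prop :=
  H.IsTree ∧ degr H k0 = m ∧ ∀ v : Fin n, v ≠ k0 → degr H v ≤ 2

/-- The graph obtained from `G` by adding the edge `{u, v}`. -/
def addEdge {V : Type*} (G : SimpleGraph V) (u v : V) : SimpleGraph V :=
  G ⊔ SimpleGraph.fromEdgeSet {s(u, v)}
namespace NotD

open MvPolynomial Sum SimpleGraph

variable {k : Type} [Field k] {n : ℕ}

/-- x-variable -/
noncomputable def xv (i : Fin n) : MvPolynomial (Fin n ⊕ Fin n) k := X (inl i)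
/-- y-variable -/
noncomputable def yv (i : Fin n) : MvPolynomial (Fin n ⊕ Fin n) k := X (inr i)
/-- short name for the edge binomial -/
noncomputable def eb (a b : Fin n) : MvPolynomial (Fin n ⊕ Fin n) k :=
  xv a * yv b - xv b * yv a

lemma eb_def (a b : Fin n) : (eb a b : MvPolynomial (Fin n ⊕ Fin n) k) = edgeBinomial k a b := rfl

lemma eb_swap (a b : Fin n) : (eb a b : MvPolynomial (Fin n ⊕ Fin n) k) = - eb b a := by
  simp only [eb]; ring

lemma plucker (a b c d : Fin n) :
    (eb a b : MvPolynomial (Fin n ⊕ Fin n) k) * eb c d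
      = eb a c * eb b d - eb a d * eb b c := by
  simp only [eb, xv, yv]; ring

lemma tri (a b c : Fin n) :
    (xv b : MvPolynomial (Fin n ⊕ Fin n) k) * eb a c
      = xv a * eb b c + xv c * eb a b := by
  simp only [eb, xv, yv]; ring

/-- evaluation of an edge binomial at a point encoded as a pair of vectors -/
lemma eval_eb (p : Fin n ⊕ Fin n → k) (a b : Fin n) :
    eval p (eb a b : MvPolynomial (Fin n ⊕ Fin n) k)
      = p (inl a) * p (inr b) - p (inl b) * p (inr a) := by
  simp [eb, xv, yv]

/-- The main contradiction skeleton: if the edge binomials (in enumeration order)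
form a d-sequence, and we can find positions `i ≤ j`, a polynomial `g` with
`g * a i` in the span of the earlier binomials, and a point killing all earlier
binomials but with `g` and `a j` both nonvanishing, we get `False`. -/
lemma skeleton {N : ℕ} (α β : Fin N → Fin n)
    (hd : IsDSequence (fun t => edgeBinomial k (α t) (β t)))
    (i j : Fin N) (hij : i ≤ j) (g : MvPolynomial (Fin n ⊕ Fin n) k)
    (p : Fin n ⊕ Fin n → k)
    (hmem : g * edgeBinomial k (α i) (β i) ∈
      Ideal.span ((fun t => edgeBinomial k (α t) (β t)) '' {l | l < i}))
    (hkill : ∀ t : Fin N, t < i → eval p (edgeBinomial k (α t) (β t)) = 0)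
    (hg : eval p g ≠ 0)
    (hj : eval p (edgeBinomial k (α j) (β j)) ≠ 0) : False := by
  set a : Fin N → MvPolynomial (Fin n ⊕ Fin n) k := fun t => edgeBinomial k (α t) (β t) with ha
  set C : Ideal (MvPolynomial (Fin n ⊕ Fin n) k) := Ideal.span (a '' {l | l < i}) with hC
  have hcolon := hd.2 i j hij
  have hgL : g ∈ Submodule.colon C (Ideal.span {a i * a j}) := by
    rw [Submodule.mem_colon]
    intro x hx
    rw [Ideal.span, SetLike.mem_coe, Submodule.mem_span_singleton] at hx
    obtain ⟨r, rfl⟩ := hx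
    have h1 : g * a i ∈ C := hmem
    have h2 : g * a i * a j ∈ C := Ideal.mul_mem_right _ _ h1
    have : g • (r • (a i * a j)) = r • (g * a i * a j) := by
      simp only [smul_eq_mul]; ring
    rw [this]
    exact Submodule.smul_mem _ _ h2
  rw [hcolon] at hgL
  have hgaj : g * a j ∈ C := by
    have := (Submodule.mem_colon.mp hgL) (a j) (Ideal.subset_span rfl)
    simpa [smul_eq_mul] using this
  have hker : C ≤ RingHom.ker (eval p) := by
    rw [hC, Ideal.span_le]
    rintro x ⟨t, ht, rfl⟩
    exact hkill t ht
  have h0 : eval p (g * a j) = 0 := hker hgaj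
  rw [map_mul] at h0
  exact mul_ne_zero hg hj h0

end NotD
namespace NotD

open MvPolynomial Sum SimpleGraph Classical

variable {k : Type} [Field k] {n : ℕ}

section Graph

variable {G : SimpleGraph (Fin n)}

/-- The graph obtained by deleting a set of edges and a set of vertices. -/
def del (G : SimpleGraph (Fin n)) (F : Set (Sym2 (Fin n))) (A : Set (Fin n)) :
    SimpleGraph (Fin n) where
  Adj x y := G.Adj x y ∧ s(x, y) ∉ F ∧ x ∉ A ∧ y ∉ A
  symm := by
    refine ⟨fun x y h => ?_⟩
    exact ⟨h.1.symm, by rw [Sym2.eq_swap]; exact h.2.1, h.2.2.2, h.2.2.1⟩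
  loopless := ⟨fun x h => G.irrefl h.1⟩

lemma del_adj {F : Set (Sym2 (Fin n))} {A : Set (Fin n)} {x y : Fin n} :
    (del G F A).Adj x y ↔ G.Adj x y ∧ s(x, y) ∉ F ∧ x ∉ A ∧ y ∉ A := Iff.rfl

/-- A property that holds along all adjacencies of a graph holds on all of a
walk's support (given it holds at the start). -/
lemma walk_support_prop {G' : SimpleGraph (Fin n)} (P : Fin n → Prop)
    (h : ∀ x y, G'.Adj x y → P x ∧ P y) {a b : Fin n} (W : G'.Walk a b) (ha : P a) :
    ∀ t ∈ W.support, P t := by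
  induction W with
  | nil => intro t ht; simp only [Walk.support_nil, List.mem_singleton] at ht; rwa [ht]
  | cons hadj W' ih =>
    intro t ht
    rw [Walk.support_cons, List.mem_cons] at ht
    rcases ht with rfl | ht
    · exact ha
    · exact ih (h _ _ hadj).2 t ht

/-- A property that holds for all adjacencies holds for all edges of a walk. -/
lemma walk_edges_prop {G' : SimpleGraph (Fin n)} (Q : Sym2 (Fin n) → Prop)
    (h : ∀ x y, G'.Adj x y → Q s(x, y)) {a b : Fin n} (W : G'.Walk a b) :
    ∀ e ∈ W.edges, Q e := by
  induction W with
  | nil => intro e he; simp at he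
  | cons hadj W' ih =>
    intro e he
    rw [Walk.edges_cons, List.mem_cons] at he
    rcases he with rfl | he
    · exact h _ _ hadj
    · exact ih e he

lemma del_le (F : Set (Sym2 (Fin n))) (A : Set (Fin n)) : del G F A ≤ G :=
  fun _ _ h => h.1

/-- Transfer a walk in `del G F A` to a walk in `G` with the same support/edges. -/
lemma del_walk_to_G {F : Set (Sym2 (Fin n))} {A : Set (Fin n)} {a b : Fin n}
    (W : (del G F A).Walk a b) :
    ∃ (W' : G.Walk a b), W'.support = W.support ∧ W'.edges = W.edges := by
  have h : ∀ e ∈ W.edges, e ∈ G.edgeSet := by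
    intro e he
    have := W.edges_subset_edgeSet he
    induction e with
    | h x y => exact (del_le F A) this
  exact ⟨W.transfer G h, W.support_transfer h, W.edges_transfer h⟩

/-- membership of a vertex in an edge of a walk puts it in the support -/
lemma mem_support_of_mem_edge {a b : Fin n} (W : G.Walk a b) (e : Sym2 (Fin n))
    (he : e ∈ W.edges) (t : Fin n) (hte : t ∈ e) : t ∈ W.support := by
  induction e with
  | h x y =>
    rcases Sym2.mem_iff.mp hte with rfl | rfl
    · exact W.fst_mem_support_of_mem_edges he
    · exact W.snd_mem_support_of_mem_edges he

/-- every vertex on a non-trivial walk is incident to one of its edges -/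
lemma exists_incident_edge {a b : Fin n} (W : G.Walk a b) :
    ∀ t ∈ W.support, t = b ∨ ∃ e ∈ W.edges, t ∈ e := by
  induction W with
  | nil => intro t ht; left; simpa using ht
  | @cons a c b hadj W' ih =>
    intro t ht
    rw [Walk.support_cons, List.mem_cons] at ht
    rcases ht with rfl | ht
    · right; exact ⟨s(t, c), by simp [Walk.edges_cons], Sym2.mem_mk_left _ _⟩
    · rcases ih t ht with rfl | ⟨e, he, hte⟩
      · left; rfl
      · right; exact ⟨e, by simp [Walk.edges_cons, he], hte⟩

section Cycle

variable (v : Fin n)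

/-- close a path back to `v` with one edge: contradiction with `hoff` -/
lemma close1 (hoff : ∀ (u : Fin n) (w : G.Walk u u), w.IsCycle → v ∉ w.support)
    {x : Fin n} (hadj : G.Adj v x) (P : G.Walk x v) (hP : P.IsPath)
    (he : s(v, x) ∉ P.edges) : False := by
  have hc : (Walk.cons hadj P).IsCycle := (Walk.cons_isCycle_iff P hadj).mpr ⟨hP, he⟩
  exact hoff v _ hc (Walk.start_mem_support _)

/-- close a path between two neighbours of `v` through `v`: contradiction -/
lemma close2 (hoff : ∀ (u : Fin n) (w : G.Walk u u), w.IsCycle → v ∉ w.support)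
    {a b : Fin n} (h1 : G.Adj v a) (h2 : G.Adj b v) (hab : a ≠ b)
    (P : G.Walk a b) (hP : P.IsPath) (hv : v ∉ P.support) : False := by
  have hQ : (P.append (Walk.cons h2 Walk.nil)).IsPath := by
    rw [Walk.isPath_def, Walk.support_append]
    simp only [Walk.support_cons, Walk.support_nil, List.tail_cons]
    rw [List.nodup_append']
    refine ⟨(Walk.isPath_def P).mp hP, List.nodup_singleton v, ?_⟩
    intro t ht hts
    rw [List.mem_singleton] at hts
    subst hts
    exact hv ht
  have hne : s(v, a) ∉ (P.append (Walk.cons h2 Walk.nil)).edges := by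
    rw [Walk.edges_append]
    simp only [Walk.edges_cons, Walk.edges_nil, List.mem_append, List.mem_singleton]
    rintro (h | h)
    · exact hv (mem_support_of_mem_edge P _ h v (Sym2.mem_mk_left _ _))
    · rw [Sym2.eq_iff] at h
      rcases h with ⟨hvb, hav⟩ | ⟨-, hab2⟩
      · exact hv (hav ▸ P.start_mem_support)
      · exact hab hab2
  exact close1 v hoff h1 _ hQ hne

end Cycle

end Graph

end NotD
namespace NotD

open MvPolynomial Sum SimpleGraph Classical

variable {k : Type} [Field k] {n : ℕ}

section Graph2

variable {G : SimpleGraph (Fin n)}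

lemma support_mem_tail {u0 : Fin n} (w0 : G.Walk u0 u0) (hw0 : w0.length ≠ 0) :
    ∀ t ∈ w0.support, t ∈ w0.support.tail := by
  cases w0 with
  | nil => simp at hw0
  | cons h q =>
    intro t ht
    rw [Walk.support_cons, List.mem_cons] at ht
    rw [Walk.support_cons, List.tail_cons]
    rcases ht with rfl | ht
    · exact q.end_mem_support
    · exact ht

lemma cycle_incident {u0 : Fin n} (w0 : G.Walk u0 u0) (hw0 : w0.length ≠ 0) :
    ∀ t ∈ w0.support, ∃ e ∈ w0.edges, t ∈ e := by
  intro t ht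
  rcases exists_incident_edge w0 t ht with rfl | h
  · cases w0 with
    | nil => simp at hw0
    | @cons _ c _ h q =>
      exact ⟨s(t, c), by simp [Walk.edges_cons], Sym2.mem_mk_left _ _⟩
  · exact h

/-- A second cycle (path between `u`,`w` plus the edge `{u,w}`) must have the same
edge set as `w0`; but it misses the cycle vertex `z0`. Contradiction. -/
lemma closeE (huni : IsUnicyclic G) {u0 : Fin n} (w0 : G.Walk u0 u0) (hw0 : w0.IsCycle)
    {u w z0 : Fin n} (hadj : G.Adj u w) (hz0 : z0 ∈ w0.support)
    (P : G.Walk u w) (hP : P.IsPath) (hfe : s(u, w) ∉ P.edges) (hz0P : z0 ∉ P.support) :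
    False := by
  have hc : (Walk.cons hadj.symm P).IsCycle := by
    rw [Walk.cons_isCycle_iff]
    refine ⟨hP, ?_⟩
    rw [Sym2.eq_swap]
    exact hfe
  obtain ⟨s, _, hsu⟩ := huni
  have h1 : ({e | e ∈ w0.edges} : Set (Sym2 (Fin n))) = s :=
    hsu _ ⟨u0, w0, hw0, rfl⟩
  have h2 : ({e | e ∈ (Walk.cons hadj.symm P).edges} : Set (Sym2 (Fin n))) = s :=
    hsu _ ⟨w, _, hc, rfl⟩
  have hlen : w0.length ≠ 0 := by
    have := hw0.three_le_length; omega
  obtain ⟨e, he, hz0e⟩ := cycle_incident w0 hlen z0 hz0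
  have heW : e ∈ (Walk.cons hadj.symm P).edges := by
    have : e ∈ ({e | e ∈ w0.edges} : Set (Sym2 (Fin n))) := he
    rw [h1, ← h2] at this
    exact this
  have : z0 ∈ (Walk.cons hadj.symm P).support :=
    mem_support_of_mem_edge _ e heW z0 hz0e
  rw [Walk.support_cons, List.mem_cons] at this
  rcases this with rfl | h
  · exact hz0P P.end_mem_support
  · exact hz0P h

/-- a path between two vertices of the cycle staying on the cycle's support -/
lemma cycle_path {u0 : Fin n} (w0 : G.Walk u0 u0) (hw0 : w0.IsCycle)
    {r s : Fin n} (hr : r ∈ w0.support) (hs : s ∈ w0.support) :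
    ∃ P : G.Walk r s, P.IsPath ∧ ∀ t ∈ P.support, t ∈ w0.support := by
  classical
  have hlen : w0.length ≠ 0 := by have := hw0.three_le_length; omega
  have hrot := w0.rotate r hr
  have hsup : ∀ t ∈ (w0.rotate r hr).support, t ∈ w0.support := by
    intro t ht
    rw [(w0.rotate r hr).support_eq_cons, List.mem_cons] at ht
    rcases ht with rfl | ht
    · exact hr
    · have hperm := w0.support_rotate r hr
      have := hperm.mem_iff.mp ht
      rw [w0.support_eq_cons]
      exact List.mem_cons_of_mem _ this
  have hs' : s ∈ (w0.rotate r hr).support := by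
    have h1 : s ∈ w0.support.tail := support_mem_tail w0 hlen s hs
    have hperm := w0.support_rotate r hr
    have h2 : s ∈ (w0.rotate r hr).support.tail := hperm.mem_iff.mpr h1
    rw [(w0.rotate r hr).support_eq_cons]
    exact List.mem_cons_of_mem _ h2
  set W := (w0.rotate r hr).takeUntil s hs' with hW
  refine ⟨W.toPath, W.toPath.2, ?_⟩
  intro t ht
  have h1 := Walk.support_toPath_subset W ht
  have h2 := Walk.support_takeUntil_subset (w0.rotate r hr) hs' h1
  exact hsup t h2

/-- `v` (off the cycle) cannot have two distinct neighbours on the cycle -/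
lemma not_two_nbrs {u0 : Fin n} (w0 : G.Walk u0 u0) (hw0 : w0.IsCycle)
    {v r s : Fin n}
    (hoff : ∀ (u : Fin n) (w : G.Walk u u), w.IsCycle → v ∉ w.support)
    (hr : r ∈ w0.support) (hs : s ∈ w0.support)
    (hrs : r ≠ s) (har : G.Adj v r) (has : G.Adj v s) : False := by
  obtain ⟨P, hP, hPsup⟩ := cycle_path w0 hw0 hr hs
  have hv : v ∉ P.support := fun h => (hoff u0 w0 hw0) (hPsup v h)
  exact close2 v hoff har has.symm hrs P hP hv

/-- reachability is constant along an adjacency -/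
lemma reach_adj {G' : SimpleGraph (Fin n)} {s x y : Fin n} (h : G'.Adj x y) :
    G'.Reachable s x ↔ G'.Reachable s y :=
  ⟨fun hr => hr.trans h.reachable, fun hr => hr.trans h.symm.reachable⟩

/-- Telescoping along a walk: some multiplier `g` with unit evaluation puts
`eb a b` into any ideal containing the walk's edge binomials. -/
lemma telescope (Nid : Ideal (MvPolynomial (Fin n ⊕ Fin n) k))
    (p : Fin n ⊕ Fin n → k) {a b : Fin n} (W : G.Walk a b)
    (hN : ∀ x y : Fin n, s(x, y) ∈ W.edges → (eb x y : MvPolynomial (Fin n ⊕ Fin n) k) ∈ Nid)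
    (hp : ∀ t ∈ W.support, p (inl t) = 1) :
    ∃ g : MvPolynomial (Fin n ⊕ Fin n) k,
      g * eb a b ∈ Nid ∧ eval p g = 1 := by
  induction W with
  | nil =>
    refine ⟨1, ?_, by simp⟩
    rw [one_mul]
    have hz : ∀ c : Fin n, (eb c c : MvPolynomial (Fin n ⊕ Fin n) k) = 0 := by
      intro c; simp [eb]
    rw [hz]
    exact Submodule.zero_mem _
  | @cons a c b hadj W' ih =>
    have hN' : ∀ x y : Fin n, s(x, y) ∈ W'.edges →
        (eb x y : MvPolynomial (Fin n ⊕ Fin n) k) ∈ Nid := by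
      intro x y hxy
      exact hN x y (by rw [Walk.edges_cons]; exact List.mem_cons_of_mem _ hxy)
    have hp' : ∀ t ∈ W'.support, p (inl t) = 1 := by
      intro t ht
      exact hp t (by rw [Walk.support_cons]; exact List.mem_cons_of_mem _ ht)
    obtain ⟨g', hg'mem, hg'val⟩ := ih hN' hp'
    refine ⟨xv c * g', ?_, ?_⟩
    · have hid : (xv c * g') * (eb a b : MvPolynomial (Fin n ⊕ Fin n) k)
          = xv a * (g' * eb c b) + (xv b * g') * eb a c := by
        simp only [eb, xv, yv]; ring
      rw [hid]
      refine Submodule.add_mem _ ?_ ?_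
      · exact Ideal.mul_mem_left _ _ hg'mem
      · refine Ideal.mul_mem_left _ _ (hN a c ?_)
        rw [Walk.edges_cons]; exact List.mem_cons_self
    · rw [map_mul, hg'val, mul_one]
      have : eval p (xv c : MvPolynomial (Fin n ⊕ Fin n) k) = p (inl c) := by
        simp [xv]
      rw [this]
      exact hp c (by rw [Walk.support_cons]; exact List.mem_cons_of_mem _ W'.start_mem_support)

end Graph2

end NotD
namespace NotD

open MvPolynomial Sum SimpleGraph Classical

variable {k : Type} [Field k] {n : ℕ}

section Framework

variable {G : SimpleGraph (Fin n)} {N : ℕ}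

/-- the binomial sequence attached to an enumeration -/
noncomputable def Abin (k : Type) [Field k] {n N : ℕ} (α β : Fin N → Fin n) :
    Fin N → MvPolynomial (Fin n ⊕ Fin n) k := fun t => edgeBinomial k (α t) (β t)

/-- the edge attached to an index -/
def edg {n N : ℕ} (α β : Fin N → Fin n) : Fin N → Sym2 (Fin n) := fun t => s(α t, β t)

lemma Abin_eq_eb (α β : Fin N → Fin n) (t : Fin N) :
    Abin k α β t = eb (α t) (β t) := rfl

lemma ebmem (α β : Fin N → Fin n) (i : Fin N) (x y : Fin n) (t : Fin N) (hti : t < i)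
    (h : edg α β t = s(x, y)) :
    (eb x y : MvPolynomial (Fin n ⊕ Fin n) k) ∈ Ideal.span (Abin k α β '' {l | l < i}) := by
  have base : Abin k α β t ∈ Ideal.span (Abin k α β '' {l | l < i}) :=
    Ideal.subset_span ⟨t, hti, rfl⟩
  rcases Sym2.eq_iff.mp h with ⟨h1, h2⟩ | ⟨h1, h2⟩
  · have heq : Abin k α β t = eb x y := by rw [Abin_eq_eb, h1, h2]
    rwa [heq] at base
  · have heq : (eb x y : MvPolynomial (Fin n ⊕ Fin n) k) = - Abin k α β t := by
      rw [Abin_eq_eb, h1, h2, ← eb_swap]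
    rw [heq]
    exact Submodule.neg_mem _ base

/-- a coloring of the vertices by 2-dimensional vectors, as a point of affine space -/
noncomputable def ptc (col : Fin n → k × k) : Fin n ⊕ Fin n → k :=
  Sum.elim (fun a => (col a).1) (fun a => (col a).2)

lemma eval_eb_ptc (col : Fin n → k × k) (a b : Fin n) :
    eval (ptc col) (eb a b : MvPolynomial (Fin n ⊕ Fin n) k)
      = (col a).1 * (col b).2 - (col b).1 * (col a).2 := by
  simp [eb, xv, yv, ptc]

lemma eval_A_zero_same (α β : Fin N → Fin n) (col : Fin n → k × k) (t : Fin N)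
    (h : col (α t) = col (β t)) : eval (ptc col) (Abin k α β t) = 0 := by
  rw [Abin_eq_eb, eval_eb_ptc, h]; ring

lemma eval_A_zero_z (α β : Fin N → Fin n) (col : Fin n → k × k) (t : Fin N)
    (h : col (α t) = 0 ∨ col (β t) = 0) : eval (ptc col) (Abin k α β t) = 0 := by
  rw [Abin_eq_eb, eval_eb_ptc]
  rcases h with h | h <;> rw [h] <;> simp

lemma eval_A_ne (α β : Fin N → Fin n) (col : Fin n → k × k) (t : Fin N) {a b : Fin n}
    (h : edg α β t = s(a, b))
    (hdet : (col a).1 * (col b).2 - (col b).1 * (col a).2 ≠ 0) :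
    eval (ptc col) (Abin k α β t) ≠ 0 := by
  rw [Abin_eq_eb, eval_eb_ptc]
  rcases Sym2.eq_iff.mp h with ⟨h1, h2⟩ | ⟨h1, h2⟩
  · rw [h1, h2]; exact hdet
  · rw [h1, h2]
    intro hc
    apply hdet
    have : (col a).1 * (col b).2 - (col b).1 * (col a).2
        = -((col b).1 * (col a).2 - (col a).1 * (col b).2) := by ring
    rw [this, hc]; ring

/-- generic killing lemma: all binomials whose edge avoids the spared set `F`
evaluate to zero at a coloring constant on `del G F Z`-components and zero on `Z`. -/
lemma kill_generic (α β : Fin N → Fin n) (col : Fin n → k × k)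
    (F : Set (Sym2 (Fin n))) (Z : Set (Fin n))
    (hcolz : ∀ a ∈ Z, col a = 0)
    (hcole : ∀ x y, (del G F Z).Adj x y → col x = col y)
    (hGadj : ∀ t, G.Adj (α t) (β t))
    (i : Fin N) (hsp : ∀ t, t < i → edg α β t ∉ F) :
    ∀ t, t < i → eval (ptc col) (Abin k α β t) = 0 := by
  intro t ht
  by_cases hz1 : α t ∈ Z
  · exact eval_A_zero_z α β col t (Or.inl (hcolz _ hz1))
  by_cases hz2 : β t ∈ Z
  · exact eval_A_zero_z α β col t (Or.inr (hcolz _ hz2))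
  exact eval_A_zero_same α β col t (hcole _ _ ⟨hGadj t, hsp t ht, hz1, hz2⟩)

end Framework

section Split

variable {G : SimpleGraph (Fin n)}

/-- a walk with nodup support whose last vertex is in an edge: the edge is the
last one -/
lemma edgelast : ∀ {c d : Fin n} (q : G.Walk c d), q.support.Nodup →
    ∀ e : Sym2 (Fin n), e ∈ q.edges → d ∈ e →
    ∃ (c' : Fin n) (q' : G.Walk c c'), G.Adj c' d ∧ e = s(c', d) ∧
      q'.edges ++ [e] = q.edges ∧ ∀ t ∈ q'.support, t ∈ q.support := by
  intro c d q
  induction q with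
  | nil => intro _ e he; simp at he
  | @cons c c2 d h1 rest ih =>
    intro hnd e he hde
    rw [Walk.edges_cons, List.mem_cons] at he
    rw [Walk.support_cons, List.nodup_cons] at hnd
    rcases he with rfl | he2
    · -- e = s(c, c2)
      rcases Sym2.mem_iff.mp hde with rfl | rfl
      · -- d = c : impossible by nodup
        exact absurd rest.end_mem_support hnd.1
      · -- d = c2, so rest is a nodup closed walk, hence nil
        cases rest with
        | nil =>
          refine ⟨c, Walk.nil, h1, rfl, by simp, ?_⟩
          intro t ht
          simp only [Walk.support_nil, List.mem_singleton] at ht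
          subst ht
          exact Walk.start_mem_support _
        | @cons _ c3 _ h2 rest2 =>
          exfalso
          rw [Walk.support_cons, List.nodup_cons] at hnd
          exact hnd.2.1 rest2.end_mem_support
    · obtain ⟨c', q'', hadj, hee, hlist, hsup⟩ := ih hnd.2 e he2 hde
      refine ⟨c', Walk.cons h1 q'', hadj, hee, ?_, ?_⟩
      · rw [Walk.edges_cons, Walk.edges_cons, List.cons_append, hlist]
      · intro t ht
        rw [Walk.support_cons, List.mem_cons] at ht
        rw [Walk.support_cons, List.mem_cons]
        rcases ht with rfl | ht
        · left; rfl
        · right; exact hsup t ht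

/-- splitting a cycle at one of its edges into a path between the endpoints -/
lemma cycle_split {x : Fin n} (W : G.Walk x x) (hW : W.IsCycle) {y : Fin n}
    (he : s(x, y) ∈ W.edges) :
    ∃ R : G.Walk x y, (∀ d ∈ R.edges, d ∈ W.edges) ∧ s(x, y) ∉ R.edges ∧
      ∀ t ∈ R.support, t ∈ W.support := by
  have hxy : x ≠ y := by
    intro h
    have := W.edges_subset_edgeSet he
    rw [h] at this
    exact G.loopless.irrefl y (by rwa [SimpleGraph.mem_edgeSet] at this)
  cases W with
  | nil => simp at he
  | @cons _ c _ h1 q =>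
    have hnodupE : (Walk.cons h1 q).edges.Nodup := hW.edges_nodup
    have hnodupS : q.support.Nodup := by
      have := hW.support_nodup
      rwa [Walk.support_cons, List.tail_cons] at this
    rw [Walk.edges_cons, List.mem_cons] at he
    rcases he with heq | he2
    · -- the edge is the first one; y = c
      have hyc : y = c := by
        rcases Sym2.eq_iff.mp heq with ⟨-, h2⟩ | ⟨h2, -⟩
        · exact h2
        · exact absurd h2 h1.ne
      subst hyc
      refine ⟨q.reverse, ?_, ?_, ?_⟩
      · intro d hd
        rw [Walk.edges_reverse, List.mem_reverse] at hd
        rw [Walk.edges_cons]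
        exact List.mem_cons_of_mem _ hd
      · rw [Walk.edges_reverse, List.mem_reverse]
        rw [Walk.edges_cons, List.nodup_cons] at hnodupE
        rw [← heq]
        exact hnodupE.1
      · intro t ht
        rw [Walk.support_reverse, List.mem_reverse] at ht
        rw [Walk.support_cons]
        exact List.mem_cons_of_mem _ ht
    · -- the edge is inside q; use edgelast
      obtain ⟨c', q', hadj, hee, hlist, hsup⟩ :=
        edgelast q hnodupS s(x, y) he2 (Sym2.mem_mk_left _ _)
      have hyc' : y = c' := by
        rcases Sym2.eq_iff.mp hee with ⟨-, h2⟩ | ⟨-, h2⟩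
        · exact absurd h2.symm hxy
        · exact h2
      subst hyc'
      have hqnodupE : q.edges.Nodup := by
        rw [Walk.edges_cons, List.nodup_cons] at hnodupE
        exact hnodupE.2
      have hheadnot : s(x, c) ∉ q.edges := by
        rw [Walk.edges_cons, List.nodup_cons] at hnodupE
        exact hnodupE.1
      refine ⟨Walk.cons h1 q', ?_, ?_, ?_⟩
      · intro d hd
        rw [Walk.edges_cons, List.mem_cons] at hd
        rw [Walk.edges_cons]
        rcases hd with rfl | hd
        · exact List.mem_cons_self
        · refine List.mem_cons_of_mem _ ?_
          rw [← hlist]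
          exact List.mem_append_left _ hd
      · rw [Walk.edges_cons, List.mem_cons]
        rintro (h | h)
        · rw [h] at he2
          exact hheadnot he2
        · have hnd2 : (q'.edges ++ [s(x, y)]).Nodup := by rwa [hlist]
          have := (List.nodup_append'.mp hnd2).2.2
          exact this h (by simp)
      · intro t ht
        rw [Walk.support_cons, List.mem_cons] at ht
        rw [Walk.support_cons]
        rcases ht with rfl | ht
        · exact List.mem_cons_self
        · exact List.mem_cons_of_mem _ (hsup t ht)

/-- rotated cycle support membership -/
lemma rotate_support_mem {u0 : Fin n} (w0 : G.Walk u0 u0) {x t : Fin n} (hx : x ∈ w0.support) :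
    t ∈ (w0.rotate x hx).support ↔ t ∈ w0.support := by
  classical
  constructor
  · intro ht
    rw [(w0.rotate x hx).support_eq_cons, List.mem_cons] at ht
    rcases ht with rfl | ht
    · exact hx
    · have hperm := w0.support_rotate x hx
      have := hperm.mem_iff.mp ht
      rw [w0.support_eq_cons]
      exact List.mem_cons_of_mem _ this
  · intro ht
    by_cases hlz : w0.length = 0
    · cases w0 with
      | nil =>
        have htx : t = x := by
          simp only [Walk.support_nil, List.mem_singleton] at ht hx
          rw [ht, hx]
        rw [htx]
        exact Walk.start_mem_support _
      | cons h q => simp [Walk.length_cons] at hlz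
    · have h1 : t ∈ w0.support.tail := support_mem_tail w0 hlz t ht
      have hperm := w0.support_rotate x hx
      have h2 : t ∈ (w0.rotate x hx).support.tail := hperm.mem_iff.mpr h1
      rw [(w0.rotate x hx).support_eq_cons]
      exact List.mem_cons_of_mem _ h2

lemma rotate_edges_mem {u0 : Fin n} (w0 : G.Walk u0 u0) {x : Fin n} (hx : x ∈ w0.support)
    {e : Sym2 (Fin n)} : e ∈ (w0.rotate x hx).edges ↔ e ∈ w0.edges := by
  classical
  exact (w0.rotate_edges x hx).mem_iff

/-- splitting the unique cycle at one of its edges -/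
lemma cycle_minus {u0 : Fin n} (w0 : G.Walk u0 u0) (hw0 : w0.IsCycle) {x y : Fin n}
    (he : s(x, y) ∈ w0.edges) :
    ∃ R : G.Walk x y, (∀ d ∈ R.edges, d ∈ w0.edges) ∧ s(x, y) ∉ R.edges ∧
      ∀ t ∈ R.support, t ∈ w0.support := by
  classical
  have hx : x ∈ w0.support := w0.fst_mem_support_of_mem_edges he
  have hW := hw0.rotate hx
  have he' : s(x, y) ∈ (w0.rotate x hx).edges := (rotate_edges_mem w0 hx).mpr he
  obtain ⟨R, h1, h2, h3⟩ := cycle_split (w0.rotate x hx) hW he'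
  exact ⟨R, fun d hd => (rotate_edges_mem w0 hx).mp (h1 d hd), h2,
    fun t ht => (rotate_support_mem w0 hx).mp (h3 t ht)⟩

end Split

end NotD
namespace NotD

open MvPolynomial Sum SimpleGraph Classical

variable {k : Type} [Field k] {n : ℕ}

/-- Case B: the maximal cycle-edge index is below the maximal `v`-edge index. -/
lemma caseB {N : ℕ} {G : SimpleGraph (Fin n)} (α β : Fin N → Fin n)
    (hadjE : ∀ t, G.Adj (α t) (β t))
    (hsurj : ∀ e ∈ G.edgeSet, ∃ t, e = s(α t, β t))
    (hinj : Function.Injective (edg α β))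
    (hd : IsDSequence (fun t => edgeBinomial k (α t) (β t)))
    {v : Fin n}
    (hoff : ∀ (u : Fin n) (w : G.Walk u u), w.IsCycle → v ∉ w.support)
    {u0 : Fin n} (w0 : G.Walk u0 u0) (hw0 : w0.IsCycle)
    {z3 : Fin n} (hvz3 : G.Adj v z3) (hvoff : v ∉ w0.support)
    (iZ iV : Fin N) (hZedge : edg α β iZ ∈ w0.edges)
    (hZmax : ∀ t : Fin N, edg α β t ∈ w0.edges → t ≤ iZ)
    (hVedge : edg α β iV = s(v, z3))
    (hij : iZ < iV) : False := by
  classical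
  set G₁ := del G {s(v, z3)} (∅ : Set (Fin n)) with hG₁
  -- v and z3 are not joined in G minus the edge {v, z3}
  have hnreach : ¬ G₁.Reachable v z3 := by
    intro hr
    obtain ⟨Wr⟩ := hr
    obtain ⟨W', hWsup, hWedg⟩ := del_walk_to_G Wr
    have hWe : ∀ e ∈ W'.edges, e ≠ s(v, z3) := by
      rw [hWedg]
      exact walk_edges_prop (fun e => e ≠ s(v, z3))
        (fun x y h => fun hc => (del_adj.mp h).2.1 (by rw [hc]; exact Set.mem_singleton _)) Wr
    set P := W'.reverse.toPath with hP
    refine close1 v hoff hvz3 (P : G.Walk z3 v) P.2 ?_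
    intro hc
    have h1 : s(v, z3) ∈ W'.reverse.edges := Walk.edges_toPath_subset _ hc
    rw [Walk.edges_reverse, List.mem_reverse] at h1
    exact hWe _ h1 rfl
  -- the cycle lives in G₁
  have hw0G1 : ∀ e ∈ w0.edges, e ∈ G₁.edgeSet := by
    intro e he
    have h1 : e ∈ G.edgeSet := w0.edges_subset_edgeSet he
    have h2 : e ≠ s(v, z3) := by
      intro h
      exact hvoff (mem_support_of_mem_edge w0 e he v (h ▸ Sym2.mem_mk_left v z3))
    induction e with
    | h x y =>
      rw [SimpleGraph.mem_edgeSet] at h1 ⊢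
      exact ⟨h1, h2, Set.notMem_empty x, Set.notMem_empty y⟩
  set W0' := w0.transfer G₁ hw0G1 with hW0'
  have creach : ∀ t ∈ w0.support, G₁.Reachable u0 t := by
    intro t ht
    have ht' : t ∈ W0'.support := by rw [hW0', w0.support_transfer]; exact ht
    exact (W0'.takeUntil t ht').reachable
  -- the coloring
  obtain ⟨col, hdet, hcyc, hcole⟩ :
      ∃ col : Fin n → k × k,
        ((col v).1 * (col z3).2 - (col z3).1 * (col v).2 ≠ 0) ∧
        (∀ t ∈ w0.support, col t = (1, 0)) ∧
        (∀ x y, G₁.Adj x y → col x = col y) := by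
    by_cases hb : G₁.Reachable z3 u0
    · refine ⟨fun t => if G₁.Reachable v t then ((0 : k), (1 : k)) else ((1 : k), (0 : k)),
        ?_, ?_, ?_⟩
      · dsimp only
        rw [if_pos (Reachable.refl v), if_neg hnreach]
        simp
      · intro t ht
        dsimp only
        rw [if_neg]
        intro hvt
        exact hnreach ((hvt.trans (creach t ht).symm).trans hb.symm)
      · intro x y h
        have hiff : G₁.Reachable v x ↔ G₁.Reachable v y := reach_adj h
        dsimp only
        exact if_congr hiff rfl rfl
    · refine ⟨fun t => if G₁.Reachable z3 t then ((0 : k), (1 : k)) else ((1 : k), (0 : k)),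
        ?_, ?_, ?_⟩
      · dsimp only
        rw [if_pos (Reachable.refl z3), if_neg (fun h => hnreach h.symm)]
        simp
      · intro t ht
        dsimp only
        rw [if_neg]
        intro hzt
        exact hb (hzt.trans (creach t ht).symm)
      · intro x y h
        have hiff : G₁.Reachable z3 x ↔ G₁.Reachable z3 y := reach_adj h
        dsimp only
        exact if_congr hiff rfl rfl
  -- killing of earlier binomials
  have hsp : ∀ t : Fin N, t < iZ → edg α β t ∉ ({s(v, z3)} : Set (Sym2 (Fin n))) := by
    intro t ht hc
    rw [Set.mem_singleton_iff, ← hVedge] at hc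
    have := hinj hc
    subst this
    exact absurd (ht.trans hij) (lt_irrefl t)
  have hkill := kill_generic α β col {s(v, z3)} ∅ (fun a ha => absurd ha (Set.notMem_empty a))
    hcole hadjE iZ hsp
  -- membership via telescoping along the cycle minus its last edge
  obtain ⟨R, hRe, hRne, hRsup⟩ := cycle_minus w0 hw0 (x := α iZ) (y := β iZ) hZedge
  have hN : ∀ x y : Fin n, s(x, y) ∈ R.edges →
      (eb x y : MvPolynomial (Fin n ⊕ Fin n) k) ∈ Ideal.span (Abin k α β '' {l | l < iZ}) := by
    intro x y hxy
    obtain ⟨t', ht'⟩ := hsurj s(x, y) (R.edges_subset_edgeSet hxy)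
    have hlt : t' < iZ := by
      have hle : t' ≤ iZ := hZmax t' (by
        show s(α t', β t') ∈ w0.edges
        rw [← ht']
        exact hRe _ hxy)
      rcases lt_or_eq_of_le hle with h | h
      · exact h
      · exfalso
        apply hRne
        have h2 : s(α iZ, β iZ) = s(x, y) := by
          subst h
          exact ht'.symm
        rw [h2]
        exact hxy
    exact ebmem α β iZ x y t' hlt ht'.symm
  have hpR : ∀ t ∈ R.support, (ptc col) (inl t) = 1 := by
    intro t ht
    have hc1 : col t = (1, 0) := hcyc t (hRsup t ht)
    show (ptc col) (inl t) = 1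
    simp [ptc, hc1]
  obtain ⟨g, hgmem, hgval⟩ := telescope (Ideal.span (Abin k α β '' {l | l < iZ}))
      (ptc col) R hN hpR
  exact skeleton α β hd iZ iV (le_of_lt hij) g (ptc col) hgmem hkill
    (by rw [hgval]; exact one_ne_zero)
    (eval_A_ne α β col iV hVedge hdet)

end NotD
namespace NotD

open MvPolynomial Sum SimpleGraph Classical

variable {k : Type} [Field k] {n : ℕ}

lemma Abin_sign {N : ℕ} (α β : Fin N → Fin n) (i : Fin N) {x y : Fin n}
    (h : edg α β i = s(x, y)) :
    Abin k α β i = eb x y ∨ Abin k α β i = - (eb x y : MvPolynomial (Fin n ⊕ Fin n) k) := by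
  rcases Sym2.eq_iff.mp h with ⟨h1, h2⟩ | ⟨h1, h2⟩
  · left; rw [Abin_eq_eb, h1, h2]
  · right; rw [Abin_eq_eb, h1, h2, ← eb_swap]

/-- Case C0: the last `v`-edge comes before the last cycle edge, and we have two
further neighbours `z1, z2` of `v` avoiding the auxiliary cycle vertex `z0`. -/
lemma caseC0 {N : ℕ} {G : SimpleGraph (Fin n)} (α β : Fin N → Fin n)
    (hadjE : ∀ t, G.Adj (α t) (β t))
    (hinj : Function.Injective (edg α β))
    (hd : IsDSequence (fun t => edgeBinomial k (α t) (β t)))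
    {v : Fin n}
    (hoff : ∀ (u : Fin n) (w : G.Walk u u), w.IsCycle → v ∉ w.support)
    (huni : IsUnicyclic G)
    {u0 : Fin n} (w0 : G.Walk u0 u0) (hw0 : w0.IsCycle) (hvoff : v ∉ w0.support)
    {z1 z2 z3 : Fin n} (hvz1 : G.Adj v z1) (hvz2 : G.Adj v z2) (hz12 : z1 ≠ z2)
    (iV iZ : Fin N) (hij : iV < iZ)
    (hVedge : edg α β iV = s(v, z3))
    (hZedge : edg α β iZ ∈ w0.edges)
    {z0 : Fin n} (hz0 : z0 ∈ w0.support) (hz0u : z0 ≠ α iZ) (hz0w : z0 ≠ β iZ)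
    (hz0z1 : z0 ≠ z1) (hz0z2 : z0 ≠ z2)
    (t1 t2 : Fin N) (ht1 : t1 < iV) (he1 : edg α β t1 = s(v, z1))
    (ht2 : t2 < iV) (he2 : edg α β t2 = s(v, z2)) : False := by
  classical
  set u := α iZ with hu
  set w := β iZ with hw
  have huw : G.Adj u w := hadjE iZ
  have hvu : v ≠ u := by
    intro h
    exact hvoff (mem_support_of_mem_edge w0 _ hZedge v (by rw [h]; exact Sym2.mem_mk_left _ _))
  have hvw : v ≠ w := by
    intro h
    exact hvoff (mem_support_of_mem_edge w0 _ hZedge v (by rw [h]; exact Sym2.mem_mk_right _ _))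
  set Zs : Set (Fin n) := {v, z0} with hZs
  set G₂ := del G {s(u, w)} Zs with hG₂
  have hnotZ : ∀ x : Fin n, x ≠ v → x ≠ z0 → x ∉ Zs := by
    intro x h1 h2 hc
    rcases hc with hc | hc
    · exact h1 hc
    · exact h2 hc
  have hz0v : z0 ≠ v := fun h => hvoff (h ▸ hz0)
  -- fact (a): z1 and z2 are not joined in G₂
  have hna : ¬ G₂.Reachable z1 z2 := by
    intro hr
    obtain ⟨Wr⟩ := hr
    obtain ⟨W', hWsup, hWedg⟩ := del_walk_to_G Wr
    have hsupProp : ∀ t ∈ Wr.support, t ∉ Zs :=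
      walk_support_prop (fun t => t ∉ Zs)
        (fun x y h => ⟨(del_adj.mp h).2.2.1, (del_adj.mp h).2.2.2⟩) Wr
        (hnotZ z1 hvz1.ne' hz0z1.symm)
    have hvW : v ∉ W'.support := by
      rw [hWsup]
      intro hc
      exact (hsupProp v hc) (Or.inl rfl)
    refine close2 v hoff hvz1 hvz2.symm hz12 (W'.toPath : G.Walk z1 z2) W'.toPath.2 ?_
    intro hc
    exact hvW (Walk.support_toPath_subset W' hc)
  -- fact (b): u and w are not joined in G₂
  have hnb : ¬ G₂.Reachable u w := by
    intro hr
    obtain ⟨Wr⟩ := hr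
    obtain ⟨W', hWsup, hWedg⟩ := del_walk_to_G Wr
    have hedgProp : ∀ e ∈ W'.edges, e ≠ s(u, w) := by
      rw [hWedg]
      exact walk_edges_prop (fun e => e ≠ s(u, w))
        (fun x y h => fun hc => (del_adj.mp h).2.1 (by rw [hc]; exact Set.mem_singleton _)) Wr
    have hsupProp : ∀ t ∈ Wr.support, t ∉ Zs :=
      walk_support_prop (fun t => t ∉ Zs)
        (fun x y h => ⟨(del_adj.mp h).2.2.1, (del_adj.mp h).2.2.2⟩) Wr
        (hnotZ u (Ne.symm hvu) (Ne.symm hz0u))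
    have hz0W : z0 ∉ W'.support := by
      rw [hWsup]
      intro hc
      exact (hsupProp z0 hc) (Or.inr rfl)
    refine closeE huni w0 hw0 huw hz0 (W'.toPath : G.Walk u w) W'.toPath.2 ?_ ?_
    · intro hc
      exact hedgProp _ (Walk.edges_toPath_subset W' hc) rfl
    · intro hc
      exact hz0W (Walk.support_toPath_subset W' hc)
  -- the coloring
  obtain ⟨col, hcz1, hcz2, hdetuw, hcolz, hcole⟩ :
      ∃ col : Fin n → k × k,
        col z1 = (1, 0) ∧ col z2 = (0, 1) ∧
        ((col u).1 * (col w).2 - (col w).1 * (col u).2 ≠ 0) ∧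
        (∀ a ∈ Zs, col a = 0) ∧
        (∀ x y, G₂.Adj x y → col x = col y) := by
    by_cases hb : G₂.Reachable z2 u ∨ G₂.Reachable z1 w
    · refine ⟨fun t => if t ∈ Zs then (0, 0) else
        (if G₂.Reachable z1 t ∨ G₂.Reachable w t then ((1 : k), (0 : k))
          else ((0 : k), (1 : k))), ?_, ?_, ?_, ?_, ?_⟩
      · dsimp only
        rw [if_neg (hnotZ z1 hvz1.ne' hz0z1.symm), if_pos (Or.inl (Reachable.refl z1))]
      · dsimp only
        rw [if_neg (hnotZ z2 hvz2.ne' hz0z2.symm), if_neg]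
        rintro (hc | hc)
        · exact hna hc
        · rcases hb with hb1 | hb2
          · exact hnb (hc.trans hb1).symm
          · exact hna (hb2.trans hc)
      · dsimp only
        rw [if_neg (hnotZ u (Ne.symm hvu) (Ne.symm hz0u)),
            if_neg (hnotZ w (Ne.symm hvw) (Ne.symm hz0w))]
        have hcu : (if G₂.Reachable z1 u ∨ G₂.Reachable w u
            then ((1 : k), (0 : k)) else ((0 : k), (1 : k))) = ((0 : k), (1 : k)) := by
          rw [if_neg]
          rintro (hc | hc)
          · rcases hb with hb1 | hb2
            · exact hna (hc.trans hb1.symm)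
            · exact hnb (hc.symm.trans hb2)
          · exact hnb hc.symm
        have hcw : (if G₂.Reachable z1 w ∨ G₂.Reachable w w
            then ((1 : k), (0 : k)) else ((0 : k), (1 : k))) = ((1 : k), (0 : k)) :=
          if_pos (Or.inr (Reachable.refl w))
        rw [hcu, hcw]
        simp
      · intro a ha
        dsimp only
        rw [if_pos ha]
        rfl
      · intro x y h
        have h1 : x ∉ Zs := (del_adj.mp h).2.2.1
        have h2 : y ∉ Zs := (del_adj.mp h).2.2.2
        dsimp only
        rw [if_neg h1, if_neg h2]
        exact if_congr (or_congr (reach_adj h) (reach_adj h)) rfl rfl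
    · push_neg at hb
      refine ⟨fun t => if t ∈ Zs then (0, 0) else
        (if G₂.Reachable z1 t ∨ G₂.Reachable u t then ((1 : k), (0 : k))
          else ((0 : k), (1 : k))), ?_, ?_, ?_, ?_, ?_⟩
      · dsimp only
        rw [if_neg (hnotZ z1 hvz1.ne' hz0z1.symm), if_pos (Or.inl (Reachable.refl z1))]
      · dsimp only
        rw [if_neg (hnotZ z2 hvz2.ne' hz0z2.symm), if_neg]
        rintro (hc | hc)
        · exact hna hc
        · exact hb.1 hc.symm
      · dsimp only
        rw [if_neg (hnotZ u (Ne.symm hvu) (Ne.symm hz0u)),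
            if_neg (hnotZ w (Ne.symm hvw) (Ne.symm hz0w))]
        rw [if_pos (Or.inr (Reachable.refl u)), if_neg]
        · simp
        · rintro (hc | hc)
          · exact hb.2 hc
          · exact hnb hc
      · intro a ha
        dsimp only
        rw [if_pos ha]
        rfl
      · intro x y h
        have h1 : x ∉ Zs := (del_adj.mp h).2.2.1
        have h2 : y ∉ Zs := (del_adj.mp h).2.2.2
        dsimp only
        rw [if_neg h1, if_neg h2]
        exact if_congr (or_congr (reach_adj h) (reach_adj h)) rfl rfl
  -- killing
  have hsp : ∀ t : Fin N, t < iV → edg α β t ∉ ({s(u, w)} : Set (Sym2 (Fin n))) := by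
    intro t ht hc
    rw [Set.mem_singleton_iff] at hc
    have : edg α β t = edg α β iZ := hc
    have := hinj this
    subst this
    exact absurd (ht.trans hij) (lt_irrefl t)
  have hkill := kill_generic α β col {s(u, w)} Zs hcolz hcole hadjE iV hsp
  -- membership
  have hbase : (eb z1 z2) * (eb v z3 : MvPolynomial (Fin n ⊕ Fin n) k) ∈
      Ideal.span (Abin k α β '' {l | l < iV}) := by
    have hpl : (eb z1 z2) * (eb v z3 : MvPolynomial (Fin n ⊕ Fin n) k)
        = eb z3 z2 * eb v z1 - eb z3 z1 * eb v z2 := by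
      simp only [eb, xv, yv]; ring
    rw [hpl]
    exact Submodule.sub_mem _
      (Ideal.mul_mem_left _ _ (ebmem α β iV v z1 t1 ht1 he1))
      (Ideal.mul_mem_left _ _ (ebmem α β iV v z2 t2 ht2 he2))
  have hmem : (eb z1 z2) * edgeBinomial k (α iV) (β iV) ∈
      Ideal.span (Abin k α β '' {l | l < iV}) := by
    rcases Abin_sign (k := k) α β iV hVedge with h | h
    · rw [show edgeBinomial k (α iV) (β iV) = Abin k α β iV from rfl, h]
      exact hbase
    · rw [show edgeBinomial k (α iV) (β iV) = Abin k α β iV from rfl, h, mul_neg]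
      exact Submodule.neg_mem _ hbase
  -- contradiction
  refine skeleton α β hd iV iZ (le_of_lt hij) (eb z1 z2) (ptc col) hmem hkill ?_ ?_
  · rw [eval_eb_ptc, hcz1, hcz2]
    simp
  · exact eval_A_ne α β col iZ rfl hdetuw

end NotD
namespace NotD

open MvPolynomial Sum SimpleGraph Classical

variable {k : Type} [Field k] {n : ℕ}

section CornerHelpers

variable {G : SimpleGraph (Fin n)}

lemma adj_of_edg {N : ℕ} (α β : Fin N → Fin n) (hadjE : ∀ t, G.Adj (α t) (β t))
    (t : Fin N) {x y : Fin n} (h : edg α β t = s(x, y)) : G.Adj x y := by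
  have h1 : s(x, y) ∈ G.edgeSet := by
    rw [← h]
    exact G.mem_edgeSet.mpr (hadjE t)
  exact G.mem_edgeSet.mp h1

/-- closing a path from `u` to `v` through the two edges `v–r`, `r–u`. -/
lemma closeVU {v r u : Fin n}
    (hoff : ∀ (x : Fin n) (w : G.Walk x x), w.IsCycle → v ∉ w.support)
    (hvr : G.Adj v r) (hru : G.Adj r u) (hvu : v ≠ u)
    (Q : G.Walk u v) (hQ : Q.IsPath) (hrQ : r ∉ Q.support) : False := by
  have htail : (Walk.cons hru Q).IsPath := by
    rw [Walk.isPath_def, Walk.support_cons]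
    exact List.nodup_cons.mpr ⟨hrQ, (Walk.isPath_def Q).mp hQ⟩
  have hedge : s(v, r) ∉ (Walk.cons hru Q).edges := by
    rw [Walk.edges_cons, List.mem_cons]
    rintro (h | h)
    · rcases Sym2.eq_iff.mp h with ⟨hvr2, -⟩ | ⟨hvu2, -⟩
      · exact hvr.ne hvr2
      · exact hvu hvu2
    · exact hrQ (mem_support_of_mem_edge Q _ h r (Sym2.mem_mk_right _ _))
  have hc : (Walk.cons hvr (Walk.cons hru Q)).IsCycle :=
    (Walk.cons_isCycle_iff _ hvr).mpr ⟨htail, hedge⟩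
  exact hoff v _ hc (Walk.start_mem_support _)

/-- extract a `G`-path from reachability in a deleted graph, retaining the
avoidance properties. -/
lemma reach_path {F : Set (Sym2 (Fin n))} {A : Set (Fin n)} {a b : Fin n}
    (h : (del G F A).Reachable a b) (ha : a ∉ A) :
    ∃ P : G.Walk a b, P.IsPath ∧ (∀ e ∈ P.edges, e ∉ F) ∧ (∀ t ∈ P.support, t ∉ A) := by
  obtain ⟨Wr⟩ := h
  obtain ⟨W', hWsup, hWedg⟩ := del_walk_to_G Wr
  have hedgProp : ∀ e ∈ W'.edges, e ∉ F := by
    rw [hWedg]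
    exact walk_edges_prop (fun e => e ∉ F) (fun x y h => (del_adj.mp h).2.1) Wr
  have hsupProp : ∀ t ∈ W'.support, t ∉ A := by
    rw [hWsup]
    exact walk_support_prop (fun t => t ∉ A)
      (fun x y h => ⟨(del_adj.mp h).2.2.1, (del_adj.mp h).2.2.2⟩) Wr ha
  exact ⟨W'.toPath, W'.toPath.2,
    fun e he => hedgProp e (Walk.edges_toPath_subset W' he),
    fun t ht => hsupProp t (Walk.support_toPath_subset W' ht)⟩

end CornerHelpers

/-- Case C1 (corner): the later of the two cycle edges at `r` comes after the
edge `{v, r}`, and before the last cycle edge `{uu, ww}`. -/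
lemma caseC1 {N : ℕ} {G : SimpleGraph (Fin n)} (α β : Fin N → Fin n)
    (hadjE : ∀ t, G.Adj (α t) (β t))
    (hinj : Function.Injective (edg α β))
    (hd : IsDSequence (fun t => edgeBinomial k (α t) (β t)))
    {v : Fin n}
    (hoff : ∀ (u : Fin n) (w : G.Walk u u), w.IsCycle → v ∉ w.support)
    (huni : IsUnicyclic G)
    {u0 : Fin n} (w0 : G.Walk u0 u0) (hw0 : w0.IsCycle)
    {r uu ww : Fin n}
    (hvr : G.Adj v r) (hr : r ∈ w0.support)
    (hvuu : v ≠ uu) (hvww : v ≠ ww) (hruu : r ≠ uu) (hrww : r ≠ ww)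
    (e1 iZ : Fin N) (hij : e1 < iZ)
    (he1 : edg α β e1 = s(r, uu))
    (hZ : edg α β iZ = s(uu, ww))
    (irw irv : Fin N) (hirw : irw < e1) (herw : edg α β irw = s(r, ww))
    (hirv : irv < e1) (herv : edg α β irv = s(v, r)) : False := by
  classical
  have hadj_rww : G.Adj r ww := adj_of_edg α β hadjE irw herw
  have hadj_uuww : G.Adj uu ww := adj_of_edg α β hadjE iZ hZ
  set Zs : Set (Fin n) := {r} with hZs
  set G₄ := del G {s(uu, ww)} Zs with hG₄
  have hwwZ : ww ∉ Zs := fun hc => hrww (Set.mem_singleton_iff.mp hc).symm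
  -- ¬ Reach ww uu in G₄ (would give a second cycle avoiding r)
  have hnuw : ¬ G₄.Reachable ww uu := by
    intro hre
    obtain ⟨P, hP, hPe, hPs⟩ := reach_path hre hwwZ
    refine closeE huni w0 hw0 hadj_uuww.symm hr P hP ?_ ?_
    · intro hc
      exact (hPe _ hc) (by rw [Sym2.eq_swap]; exact Set.mem_singleton _)
    · intro hc
      exact (hPs r hc) rfl
  -- ¬ Reach ww v in G₄ (would give a cycle through v)
  have hnwv : ¬ G₄.Reachable ww v := by
    intro hre
    obtain ⟨P, hP, hPe, hPs⟩ := reach_path hre hwwZ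
    exact closeVU hoff hvr hadj_rww hvww P hP (fun hc => (hPs r hc) rfl)
  -- coloring
  set col : Fin n → k × k := fun t => if t ∈ Zs then (0, 0) else
    (if G₄.Reachable ww t then ((0 : k), (1 : k)) else ((1 : k), (0 : k))) with hcol
  have hcww : col ww = (0, 1) := by
    rw [hcol]
    dsimp only
    rw [if_neg hwwZ, if_pos (Reachable.refl ww)]
  have hcuu : col uu = (1, 0) := by
    rw [hcol]
    dsimp only
    rw [if_neg (fun hc => hruu (Set.mem_singleton_iff.mp hc).symm), if_neg hnuw]
  have hcv : col v = (1, 0) := by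
    rw [hcol]
    dsimp only
    rw [if_neg (fun hc => hvr.ne (Set.mem_singleton_iff.mp hc)), if_neg hnwv]
  have hcolz : ∀ a ∈ Zs, col a = 0 := by
    intro a ha
    rw [hcol]
    dsimp only
    rw [if_pos ha]
    rfl
  have hcole : ∀ x y, G₄.Adj x y → col x = col y := by
    intro x y h
    rw [hcol]
    dsimp only
    rw [if_neg (del_adj.mp h).2.2.1, if_neg (del_adj.mp h).2.2.2]
    exact if_congr (reach_adj h) rfl rfl
  -- killing
  have hsp : ∀ t : Fin N, t < e1 → edg α β t ∉ ({s(uu, ww)} : Set (Sym2 (Fin n))) := by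
    intro t ht hc
    rw [Set.mem_singleton_iff, ← hZ] at hc
    have := hinj hc
    subst this
    exact absurd (ht.trans hij) (lt_irrefl t)
  have hkill := kill_generic α β col {s(uu, ww)} Zs hcolz hcole hadjE e1 hsp
  -- membership
  have hbase : (eb ww v) * (eb r uu : MvPolynomial (Fin n ⊕ Fin n) k) ∈
      Ideal.span (Abin k α β '' {l | l < e1}) := by
    have hpl : (eb ww v) * (eb r uu : MvPolynomial (Fin n ⊕ Fin n) k)
        = eb uu v * eb r ww - eb uu ww * eb r v := by
      simp only [eb, xv, yv]; ring
    rw [hpl]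
    exact Submodule.sub_mem _
      (Ideal.mul_mem_left _ _ (ebmem α β e1 r ww irw hirw herw))
      (Ideal.mul_mem_left _ _ (ebmem α β e1 r v irv hirv (herv.trans (Sym2.eq_swap))))
  have hmem : (eb ww v) * edgeBinomial k (α e1) (β e1) ∈
      Ideal.span (Abin k α β '' {l | l < e1}) := by
    rcases Abin_sign (k := k) α β e1 he1 with h | h
    · rw [show edgeBinomial k (α e1) (β e1) = Abin k α β e1 from rfl, h]
      exact hbase
    · rw [show edgeBinomial k (α e1) (β e1) = Abin k α β e1 from rfl, h, mul_neg]
      exact Submodule.neg_mem _ hbase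
  refine skeleton α β hd e1 iZ (le_of_lt hij) (eb ww v) (ptc col) hmem hkill ?_ ?_
  · rw [eval_eb_ptc, hcww, hcv]
    simp
  · refine eval_A_ne α β col iZ hZ ?_
    rw [hcuu, hcww]
    simp

end NotD
namespace NotD

open MvPolynomial Sum SimpleGraph Classical

variable {k : Type} [Field k] {n : ℕ}

/-- Case C2 (corner): both cycle edges at `r` come before the edge `{v, r}`. -/
lemma caseC2 {N : ℕ} {G : SimpleGraph (Fin n)} (α β : Fin N → Fin n)
    (hadjE : ∀ t, G.Adj (α t) (β t))
    (hinj : Function.Injective (edg α β))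
    (hd : IsDSequence (fun t => edgeBinomial k (α t) (β t)))
    {v : Fin n}
    (hoff : ∀ (u : Fin n) (w : G.Walk u u), w.IsCycle → v ∉ w.support)
    (huni : IsUnicyclic G)
    {u0 : Fin n} (w0 : G.Walk u0 u0) (hw0 : w0.IsCycle) (hvoff : v ∉ w0.support)
    {r z3 : Fin n}
    (hvr : G.Adj v r) (hvz3 : G.Adj v z3) (hr : r ∈ w0.support) (hz3r : z3 ≠ r)
    (irv iV iZ : Fin N)
    (hirviV : irv < iV) (hirviZ : irv < iZ)
    (herv : edg α β irv = s(v, r))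
    (hVedge : edg α β iV = s(v, z3))
    (hZedge : edg α β iZ ∈ w0.edges)
    (hru : r ≠ α iZ) (hrw : r ≠ β iZ)
    (iru irw : Fin N) (hiru : iru < irv) (heru : edg α β iru = s(r, α iZ))
    (hirw : irw < irv) (herw : edg α β irw = s(r, β iZ)) : False := by
  classical
  set u := α iZ with hu
  set w := β iZ with hw
  have huw : G.Adj u w := hadjE iZ
  have hadj_ru : G.Adj r u := adj_of_edg α β hadjE iru heru
  have hadj_rw : G.Adj r w := adj_of_edg α β hadjE irw herw
  have hvu : v ≠ u := by
    intro h
    exact hvoff (mem_support_of_mem_edge w0 _ hZedge v (by rw [h]; exact Sym2.mem_mk_left _ _))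
  have hvw : v ≠ w := by
    intro h
    exact hvoff (mem_support_of_mem_edge w0 _ hZedge v (by rw [h]; exact Sym2.mem_mk_right _ _))
  set Zs : Set (Fin n) := {r} with hZs
  set Fs : Set (Sym2 (Fin n)) := {s(v, z3), s(u, w)} with hFs
  set G₅ := del G Fs Zs with hG₅
  have huZ : u ∉ Zs := fun hc => hru (Set.mem_singleton_iff.mp hc).symm
  have hvZ : v ∉ Zs := fun hc => hvr.ne (Set.mem_singleton_iff.mp hc)
  -- (i) u and w are not joined in G₅
  have hnuw : ¬ G₅.Reachable u w := by
    intro hre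
    obtain ⟨P, hP, hPe, hPs⟩ := reach_path hre huZ
    refine closeE huni w0 hw0 huw hr P hP ?_ (fun hc => (hPs r hc) rfl)
    intro hc
    exact (hPe _ hc) (Or.inr rfl)
  -- (ii) v and w are not joined in G₅
  have hnvw : ¬ G₅.Reachable v w := by
    intro hre
    obtain ⟨P, hP, hPe, hPs⟩ := reach_path hre hvZ
    by_cases hup : u ∈ P.support
    · have hQ0 : (P.takeUntil u hup).IsPath := hP.takeUntil hup
      refine closeVU hoff hvr hadj_ru hvu (P.takeUntil u hup).reverse (hQ0.reverse) ?_
      rw [Walk.support_reverse, List.mem_reverse]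
      intro hc
      exact (hPs r (Walk.support_takeUntil_subset _ hup hc)) rfl
    · set Q := Walk.cons huw P.reverse with hQ
      have hQpath : Q.IsPath := by
        rw [hQ, Walk.isPath_def, Walk.support_cons]
        refine List.nodup_cons.mpr ⟨?_, ?_⟩
        · rw [Walk.support_reverse, List.mem_reverse]
          exact hup
        · rw [← Walk.isPath_def]
          exact hP.reverse
      refine closeVU hoff hvr hadj_ru hvu Q hQpath ?_
      rw [hQ, Walk.support_cons, List.mem_cons]
      rintro (hc | hc)
      · exact hru hc
      · rw [Walk.support_reverse, List.mem_reverse] at hc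
        exact (hPs r hc) rfl
  -- (iii) v and z3 are not joined in G₅
  have hnvz3 : ¬ G₅.Reachable v z3 := by
    intro hre
    obtain ⟨P, hP, hPe, hPs⟩ := reach_path hre hvZ
    refine close1 v hoff hvz3 P.reverse hP.reverse ?_
    rw [Walk.edges_reverse, List.mem_reverse]
    intro hc
    exact (hPe _ hc) (Or.inl rfl)
  -- (iv) u and z3 are not joined in G₅
  have hnuz3 : ¬ G₅.Reachable u z3 := by
    intro hre
    obtain ⟨P, hP, hPe, hPs⟩ := reach_path hre huZ
    by_cases hvp : v ∈ P.support
    · have hQ0 : (P.takeUntil v hvp).IsPath := hP.takeUntil hvp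
      refine closeVU hoff hvr hadj_ru hvu (P.takeUntil v hvp) hQ0 ?_
      intro hc
      exact (hPs r (Walk.support_takeUntil_subset _ hvp hc)) rfl
    · set Q := P.append (Walk.cons hvz3.symm Walk.nil) with hQ
      have hQpath : Q.IsPath := by
        rw [hQ, Walk.isPath_def, Walk.support_append]
        simp only [Walk.support_cons, Walk.support_nil, List.tail_cons]
        rw [List.nodup_append']
        refine ⟨(Walk.isPath_def P).mp hP, List.nodup_singleton v, ?_⟩
        intro t ht hts
        rw [List.mem_singleton] at hts
        subst hts
        exact hvp ht
      refine closeVU hoff hvr hadj_ru hvu Q hQpath ?_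
      rw [hQ, Walk.support_append, List.mem_append]
      rintro (hc | hc)
      · exact (hPs r hc) rfl
      · simp only [Walk.support_cons, Walk.support_nil, List.tail_cons,
          List.mem_singleton] at hc
        exact hvr.ne' hc
  -- coloring
  set col : Fin n → k × k := fun t => if t ∈ Zs then (0, 0) else
    (if G₅.Reachable u t ∨ G₅.Reachable v t then ((1 : k), (0 : k))
      else ((0 : k), (1 : k))) with hcol
  have hcu : col u = (1, 0) := by
    rw [hcol]; dsimp only
    rw [if_neg huZ, if_pos (Or.inl (Reachable.refl u))]
  have hcv : col v = (1, 0) := by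
    rw [hcol]; dsimp only
    rw [if_neg hvZ, if_pos (Or.inr (Reachable.refl v))]
  have hcw : col w = (0, 1) := by
    rw [hcol]; dsimp only
    rw [if_neg (fun hc => hrw (Set.mem_singleton_iff.mp hc).symm), if_neg]
    rintro (hc | hc)
    · exact hnuw hc
    · exact hnvw hc
  have hcz3 : col z3 = (0, 1) := by
    rw [hcol]; dsimp only
    rw [if_neg (fun hc => hz3r (Set.mem_singleton_iff.mp hc)), if_neg]
    rintro (hc | hc)
    · exact hnuz3 hc
    · exact hnvz3 hc
  have hcolz : ∀ a ∈ Zs, col a = 0 := by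
    intro a ha
    rw [hcol]; dsimp only
    rw [if_pos ha]
    rfl
  have hcole : ∀ x y, G₅.Adj x y → col x = col y := by
    intro x y h
    rw [hcol]; dsimp only
    rw [if_neg (del_adj.mp h).2.2.1, if_neg (del_adj.mp h).2.2.2]
    exact if_congr (or_congr (reach_adj h) (reach_adj h)) rfl rfl
  -- killing
  have hsp : ∀ t : Fin N, t < irv → edg α β t ∉ Fs := by
    intro t ht hc
    rcases hc with hc | hc
    · rw [← hVedge] at hc
      have := hinj hc
      subst this
      exact absurd (ht.trans hirviV) (lt_irrefl t)
    · rw [Set.mem_singleton_iff] at hc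
      have hc2 : edg α β t = edg α β iZ := hc
      have := hinj hc2
      subst this
      exact absurd (ht.trans hirviZ) (lt_irrefl t)
  have hkill := kill_generic α β col Fs Zs hcolz hcole hadjE irv hsp
  -- membership
  have hbase : (eb u w) * (eb v r : MvPolynomial (Fin n ⊕ Fin n) k) ∈
      Ideal.span (Abin k α β '' {l | l < irv}) := by
    have hpl : (eb u w) * (eb v r : MvPolynomial (Fin n ⊕ Fin n) k)
        = eb v u * eb r w - eb v w * eb r u := by
      simp only [eb, xv, yv]; ring
    rw [hpl]
    exact Submodule.sub_mem _
      (Ideal.mul_mem_left _ _ (ebmem α β irv r w irw hirw herw))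
      (Ideal.mul_mem_left _ _ (ebmem α β irv r u iru hiru heru))
  have hmem : (eb u w) * edgeBinomial k (α irv) (β irv) ∈
      Ideal.span (Abin k α β '' {l | l < irv}) := by
    rcases Abin_sign (k := k) α β irv herv with h | h
    · rw [show edgeBinomial k (α irv) (β irv) = Abin k α β irv from rfl, h]
      exact hbase
    · rw [show edgeBinomial k (α irv) (β irv) = Abin k α β irv from rfl, h, mul_neg]
      exact Submodule.neg_mem _ hbase
  refine skeleton α β hd irv iV (le_of_lt hirviV) (eb u w) (ptc col) hmem hkill ?_ ?_
  · rw [eval_eb_ptc, hcu, hcw]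
    simp
  · refine eval_A_ne α β col iV hVedge ?_
    rw [hcv, hcz3]
    simp

end NotD
namespace NotD

open MvPolynomial Sum SimpleGraph Classical

variable {k : Type} [Field k] {n : ℕ}

lemma three_nbrs {G : SimpleGraph (Fin n)} {v : Fin n} (h : 3 ≤ degr G v) :
    ∃ a b c : Fin n, G.Adj v a ∧ G.Adj v b ∧ G.Adj v c ∧ a ≠ b ∧ a ≠ c ∧ b ≠ c := by
  obtain ⟨t, hts, htc⟩ := Set.exists_subset_card_eq h
  obtain ⟨a, b, c, hab, hac, hbc, rfl⟩ := Set.ncard_eq_three.mp htc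
  refine ⟨a, b, c, ?_, ?_, ?_, hab, hac, hbc⟩
  · exact hts (by simp)
  · exact hts (by simp)
  · exact hts (by simp)

lemma idx_ne {N : ℕ} (α β : Fin N → Fin n) (hinj : Function.Injective (edg α β))
    {t s : Fin N} {e f : Sym2 (Fin n)} (ht : edg α β t = e) (hs : edg α β s = f)
    (hef : e ≠ f) : t ≠ s := by
  intro hc
  subst hc
  exact hef (ht.symm.trans hs)

/-- in the corner case, the cycle is a triangle on `{u, w, r}` and contains
the edges at `r`. -/
lemma triangle_edges {G : SimpleGraph (Fin n)} {u0 : Fin n} (w0 : G.Walk u0 u0)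
    (hw0 : w0.IsCycle) {u w r : Fin n}
    (hSF : w0.support.tail.toFinset = {u, w, r})
    (huw : u ≠ w) (hur : u ≠ r) (hwr : w ≠ r) :
    s(r, u) ∈ w0.edges ∧ s(r, w) ∈ w0.edges := by
  classical
  have hlz : w0.length ≠ 0 := by have := hw0.three_le_length; omega
  have hcard : w0.support.tail.toFinset.card = w0.length := by
    rw [List.toFinset_card_of_nodup hw0.support_nodup]
    have := w0.length_support
    rw [w0.support_eq_cons] at this
    simp only [List.length_cons] at this
    omega
  have hlen3 : w0.length = 3 := by
    have h1 : ({u, w, r} : Finset (Fin n)).card = 3 := by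
      rw [Finset.card_insert_of_notMem (by simp [hur, huw]),
        Finset.card_insert_of_notMem (by simp [hwr])]
      simp
    rw [hSF, h1] at hcard
    omega
  set EF := w0.edges.toFinset with hEF
  have hEFcard : EF.card = 3 := by
    rw [hEF, List.toFinset_card_of_nodup hw0.edges_nodup, w0.length_edges, hlen3]
  set TRI : Finset (Sym2 (Fin n)) := {s(u, w), s(r, u), s(r, w)} with hTRI
  have hsub : EF ⊆ TRI := by
    intro e he
    rw [hEF, List.mem_toFinset] at he
    induction e with
    | h x y =>
      have hx : x ∈ w0.support := w0.fst_mem_support_of_mem_edges he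
      have hy : y ∈ w0.support := w0.snd_mem_support_of_mem_edges he
      have hxy : x ≠ y := by
        intro hc
        have := w0.edges_subset_edgeSet he
        rw [hc] at this
        exact G.loopless.irrefl y (G.mem_edgeSet.mp this)
      have hx3 : x = u ∨ x = w ∨ x = r := by
        have := support_mem_tail w0 hlz x hx
        rw [← List.mem_toFinset, hSF] at this
        simpa using this
      have hy3 : y = u ∨ y = w ∨ y = r := by
        have := support_mem_tail w0 hlz y hy
        rw [← List.mem_toFinset, hSF] at this
        simpa using this
      rw [hTRI]
      simp only [Finset.mem_insert, Finset.mem_singleton]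
      rcases hx3 with rfl | rfl | rfl <;> rcases hy3 with rfl | rfl | rfl
      · exact absurd rfl hxy
      · left; rfl
      · right; left; rw [Sym2.eq_swap]
      · left; rw [Sym2.eq_swap]
      · exact absurd rfl hxy
      · right; right; rw [Sym2.eq_swap]
      · right; left; rfl
      · right; right; rfl
      · exact absurd rfl hxy
  have hTRIcard : TRI.card ≤ 3 := by
    rw [hTRI]
    refine le_trans (Finset.card_insert_le _ _) ?_
    have := Finset.card_insert_le s(r, u) ({s(r, w)} : Finset (Sym2 (Fin n)))
    simp only [Finset.card_singleton] at this ⊢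
    omega
  have heq : EF = TRI := Finset.eq_of_subset_of_card_le hsub (by omega)
  constructor
  · rw [← List.mem_toFinset, ← hEF, heq, hTRI]
    simp
  · rw [← List.mem_toFinset, ← hEF, heq, hTRI]
    simp

end NotD
open NotD MvPolynomial Sum SimpleGraph in
set_option maxHeartbeats 2000000 in
/-- Let `G` be a connected unicyclic graph on `n` vertices having
a vertex of degree at least `3` which does not lie on the unique cycle of `G`.
Then no enumeration of the edge-binomials of `G` forms a d-sequence in `S`. -/
theorem not_dSequence_of_degree_three_off_cycle (k : Type) [Field k] {n : ℕ}
    (G : SimpleGraph (Fin n)) (hconn : G.Connected) (huni : IsUnicyclic G)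
    (v : Fin n) (hdeg : 3 ≤ degr G v)
    (hoff : ∀ (u : Fin n) (w : G.Walk u u), w.IsCycle → v ∉ w.support) :
    ¬ EdgeBinomialsFormDSequence k G := by
  classical
  rintro ⟨N, α, β, ⟨hadjE, hsurj, hinjS⟩, hd⟩
  have hinj : Function.Injective (edg α β) := hinjS
  have huni' : IsUnicyclic G := huni
  obtain ⟨s0, ⟨u0, w0, hw0, hs0⟩, -⟩ := huni
  have hvoff : v ∉ w0.support := hoff u0 w0 hw0
  obtain ⟨n1, n2, n3, hvn1, hvn2, hvn3, h12, h13, h23⟩ := three_nbrs hdeg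
  have hidx : ∀ x y : Fin n, G.Adj x y → ∃ t, edg α β t = s(x, y) := by
    intro x y h
    obtain ⟨t, ht⟩ := hsurj s(x, y) (G.mem_edgeSet.mpr h)
    exact ⟨t, ht.symm⟩
  -- index of the last cycle edge
  set TZ : Finset (Fin N) := Finset.univ.filter (fun t => edg α β t ∈ w0.edges) with hTZ
  have hTZne : TZ.Nonempty := by
    have hlz : w0.length ≠ 0 := by have := hw0.three_le_length; omega
    have hene : w0.edges ≠ [] := by
      intro h
      have h2 := w0.length_edges
      rw [h] at h2
      simp only [List.length_nil] at h2
      exact hlz h2.symm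
    obtain ⟨e0, he0⟩ := List.exists_mem_of_ne_nil _ hene
    obtain ⟨t0, ht0⟩ := hsurj e0 (w0.edges_subset_edgeSet he0)
    exact ⟨t0, Finset.mem_filter.mpr ⟨Finset.mem_univ _,
      by rw [show edg α β t0 = e0 from ht0.symm]; exact he0⟩⟩
  set iZ := TZ.max' hTZne with hiZ
  have hZedge : edg α β iZ ∈ w0.edges :=
    (Finset.mem_filter.mp (TZ.max'_mem hTZne)).2
  have hZmax : ∀ t : Fin N, edg α β t ∈ w0.edges → t ≤ iZ := by
    intro t ht
    exact TZ.le_max' t (Finset.mem_filter.mpr ⟨Finset.mem_univ _, ht⟩)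
  -- index of the last v-edge
  set TV : Finset (Fin N) := Finset.univ.filter (fun t => v ∈ edg α β t) with hTV
  have hTVne : TV.Nonempty := by
    obtain ⟨t, ht⟩ := hidx v n1 hvn1
    exact ⟨t, Finset.mem_filter.mpr ⟨Finset.mem_univ _,
      by rw [ht]; exact Sym2.mem_mk_left _ _⟩⟩
  set iV := TV.max' hTVne with hiV
  have hVmem : v ∈ edg α β iV :=
    (Finset.mem_filter.mp (TV.max'_mem hTVne)).2
  have hVmax : ∀ t : Fin N, v ∈ edg α β t → t ≤ iV := by
    intro t ht
    exact TV.le_max' t (Finset.mem_filter.mpr ⟨Finset.mem_univ _, ht⟩)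
  obtain ⟨z3, hVedge, hvz3⟩ : ∃ z3, edg α β iV = s(v, z3) ∧ G.Adj v z3 := by
    rcases Sym2.mem_iff.mp hVmem with h | h
    · refine ⟨β iV, ?_, ?_⟩
      · rw [h]; rfl
      · rw [h]; exact hadjE iV
    · refine ⟨α iV, ?_, ?_⟩
      · rw [h]
        exact Sym2.eq_swap
      · rw [h]; exact (hadjE iV).symm
  have hZVne : iZ ≠ iV := by
    intro h
    apply hvoff
    apply mem_support_of_mem_edge w0 _ hZedge v
    rw [show edg α β iZ = s(v, z3) from h ▸ hVedge]
    exact Sym2.mem_mk_left _ _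
  rcases lt_or_gt_of_ne hZVne with hBlt | hClt
  · -- Case B
    exact caseB α β hadjE hsurj hinj hd hoff w0 hw0 hvz3 hvoff iZ iV hZedge hZmax hVedge hBlt
  · -- Case C : iV < iZ
    have hvu : v ≠ α iZ := by
      intro h
      exact hvoff (mem_support_of_mem_edge w0 _ hZedge v
        (by rw [h]; exact Sym2.mem_mk_left _ _))
    have hvw : v ≠ β iZ := by
      intro h
      exact hvoff (mem_support_of_mem_edge w0 _ hZedge v
        (by rw [h]; exact Sym2.mem_mk_right _ _))
    obtain ⟨o1, o2, ho12, hvo1, hvo2, ho1z3, ho2z3⟩ :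
        ∃ o1 o2 : Fin n, o1 ≠ o2 ∧ G.Adj v o1 ∧ G.Adj v o2 ∧ o1 ≠ z3 ∧ o2 ≠ z3 := by
      by_cases h1 : n1 = z3
      · exact ⟨n2, n3, h23, hvn2, hvn3, by rw [← h1]; exact h12.symm,
          by rw [← h1]; exact h13.symm⟩
      · by_cases h2 : n2 = z3
        · exact ⟨n1, n3, h13, hvn1, hvn3, h1, by rw [← h2]; exact h23.symm⟩
        · exact ⟨n1, n2, h12, hvn1, hvn2, h1, h2⟩
    have hvidx : ∀ z : Fin n, G.Adj v z → z ≠ z3 →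
        ∃ t : Fin N, t < iV ∧ edg α β t = s(v, z) := by
      intro z hz hzz3
      obtain ⟨t, ht⟩ := hidx v z hz
      have hle : t ≤ iV := hVmax t (by rw [ht]; exact Sym2.mem_mk_left _ _)
      have hne : t ≠ iV := by
        refine idx_ne α β hinj ht hVedge ?_
        intro hc
        rcases Sym2.eq_iff.mp hc with ⟨-, hh2⟩ | ⟨hh2, -⟩
        · exact hzz3 hh2
        · exact hvz3.ne hh2
      exact ⟨t, lt_of_le_of_ne hle hne, ht⟩
    have key : ∀ z1 z2 : Fin n, G.Adj v z1 → G.Adj v z2 → z1 ≠ z2 → z1 ≠ z3 → z2 ≠ z3 →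
        z2 ∉ w0.support → False := by
      intro z1 z2 hvz1 hvz2 hz12 hz1z3 hz2z3 hz2off
      obtain ⟨t1, ht1, he1⟩ := hvidx z1 hvz1 hz1z3
      obtain ⟨t2, ht2, he2⟩ := hvidx z2 hvz2 hz2z3
      set SF := w0.support.tail.toFinset with hSF
      have hlz : w0.length ≠ 0 := by have := hw0.three_le_length; omega
      have hSFcard : 3 ≤ SF.card := by
        rw [hSF, List.toFinset_card_of_nodup hw0.support_nodup]
        have hl1 := w0.length_support
        rw [w0.support_eq_cons] at hl1
        simp only [List.length_cons] at hl1
        have := hw0.three_le_length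
        omega
      have hmemS : ∀ x : Fin n, x ∈ SF → x ∈ w0.support := by
        intro x hx
        rw [hSF, List.mem_toFinset] at hx
        rw [w0.support_eq_cons]
        exact List.mem_cons_of_mem _ hx
      by_cases hz0ex : ∃ z0 ∈ SF, z0 ≠ α iZ ∧ z0 ≠ β iZ ∧ z0 ≠ z1
      · obtain ⟨z0, hz0S, hz0u, hz0w, hz0z1⟩ := hz0ex
        exact caseC0 α β hadjE hinj hd hoff huni' w0 hw0 hvoff hvz1 hvz2 hz12 iV iZ hClt
          hVedge hZedge (hmemS z0 hz0S) hz0u hz0w hz0z1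
          (fun hc => hz2off (hc ▸ hmemS z0 hz0S)) t1 t2 ht1 he1 ht2 he2
      · push_neg at hz0ex
        have hsub : SF ⊆ {α iZ, β iZ, z1} := by
          intro x hx
          rcases eq_or_ne x (α iZ) with rfl | hxu
          · simp
          rcases eq_or_ne x (β iZ) with rfl | hxw
          · simp
          have hxz1 := hz0ex x hx hxu hxw
          simp [hxz1]
        have hz1uw : z1 ≠ α iZ ∧ z1 ≠ β iZ := by
          constructor <;> intro hc
          · have hset : ({α iZ, β iZ, z1} : Finset (Fin n)) = {α iZ, β iZ} := by
              rw [hc]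
              ext x
              simp only [Finset.mem_insert, Finset.mem_singleton]
              tauto
            have hcard2 : SF.card ≤ 2 := by
              refine le_trans (Finset.card_le_card hsub) ?_
              rw [hset]
              refine le_trans (Finset.card_insert_le _ _) ?_
              simp
            omega
          · have hset : ({α iZ, β iZ, z1} : Finset (Fin n)) = {α iZ, β iZ} := by
              rw [hc]
              ext x
              simp only [Finset.mem_insert, Finset.mem_singleton]
              tauto
            have hcard2 : SF.card ≤ 2 := by
              refine le_trans (Finset.card_le_card hsub) ?_
              rw [hset]
              refine le_trans (Finset.card_insert_le _ _) ?_
              simp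
            omega
        have huwne : α iZ ≠ β iZ := (hadjE iZ).ne
        have h3le : ({α iZ, β iZ, z1} : Finset (Fin n)).card ≤ 3 := by
          refine le_trans (Finset.card_insert_le _ _) ?_
          have := Finset.card_insert_le (β iZ) ({z1} : Finset (Fin n))
          simp only [Finset.card_singleton] at this ⊢
          omega
        have hSFeq : SF = {α iZ, β iZ, z1} :=
          Finset.eq_of_subset_of_card_le hsub (le_trans h3le hSFcard)
        have hz1S : z1 ∈ SF := by rw [hSFeq]; simp
        have hrS : z1 ∈ w0.support := hmemS _ hz1S
        obtain ⟨heru, herw⟩ := triangle_edges w0 hw0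
          (by rw [← hSF]; exact hSFeq) huwne (Ne.symm hz1uw.1) (Ne.symm hz1uw.2)
        have hadjru : G.Adj z1 (α iZ) := G.mem_edgeSet.mp (w0.edges_subset_edgeSet heru)
        have hadjrw : G.Adj z1 (β iZ) := G.mem_edgeSet.mp (w0.edges_subset_edgeSet herw)
        obtain ⟨tru, hetru⟩ := hidx z1 (α iZ) hadjru
        obtain ⟨trw, hetrw⟩ := hidx z1 (β iZ) hadjrw
        have htruZ : tru < iZ := by
          refine lt_of_le_of_ne (hZmax tru (by rw [hetru]; exact heru)) ?_
          refine idx_ne α β hinj hetru rfl ?_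
          intro hc
          rcases Sym2.eq_iff.mp hc with ⟨hh1, -⟩ | ⟨hh1, -⟩
          · exact hz1uw.1 hh1
          · exact hz1uw.2 hh1
        have htrwZ : trw < iZ := by
          refine lt_of_le_of_ne (hZmax trw (by rw [hetrw]; exact herw)) ?_
          refine idx_ne α β hinj hetrw rfl ?_
          intro hc
          rcases Sym2.eq_iff.mp hc with ⟨hh1, -⟩ | ⟨-, hh2⟩
          · exact hz1uw.1 hh1
          · exact (hadjE iZ).ne hh2.symm
        have htrune : tru ≠ trw := by
          refine idx_ne α β hinj hetru hetrw ?_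
          intro hc
          rcases Sym2.eq_iff.mp hc with ⟨-, hh2⟩ | ⟨hh1, -⟩
          · exact huwne hh2
          · exact hz1uw.2 hh1
        have ht1tru : t1 ≠ tru := by
          refine idx_ne α β hinj he1 hetru ?_
          intro hc
          rcases Sym2.eq_iff.mp hc with ⟨hh1, -⟩ | ⟨hh1, -⟩
          · exact hvz1.ne hh1
          · exact hvu hh1
        have ht1trw : t1 ≠ trw := by
          refine idx_ne α β hinj he1 hetrw ?_
          intro hc
          rcases Sym2.eq_iff.mp hc with ⟨hh1, -⟩ | ⟨hh1, -⟩
          · exact hvz1.ne hh1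
          · exact hvw hh1
        rcases le_total trw tru with hle1 | hle2
        · have htrwtru : trw < tru := lt_of_le_of_ne hle1 (Ne.symm htrune)
          rcases lt_or_gt_of_ne ht1tru with hlt | hgt
          · exact caseC1 α β hadjE hinj hd hoff huni' w0 hw0 hvz1 hrS hvu hvw
              hz1uw.1 hz1uw.2 tru iZ htruZ hetru rfl trw t1 htrwtru hetrw hlt he1
          · exact caseC2 α β hadjE hinj hd hoff huni' w0 hw0 hvoff hvz1 hvz3 hrS
              (Ne.symm hz1z3) t1 iV iZ ht1 (ht1.trans hClt) he1 hVedge hZedge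
              hz1uw.1 hz1uw.2 tru trw hgt hetru (htrwtru.trans hgt) hetrw
        · have htrutrw : tru < trw := lt_of_le_of_ne hle2 htrune
          rcases lt_or_gt_of_ne ht1trw with hlt | hgt
          · exact caseC1 α β hadjE hinj hd hoff huni' w0 hw0 hvz1 hrS hvw hvu
              hz1uw.2 hz1uw.1 trw iZ htrwZ hetrw Sym2.eq_swap tru t1 htrutrw hetru hlt he1
          · exact caseC2 α β hadjE hinj hd hoff huni' w0 hw0 hvoff hvz1 hvz3 hrS
              (Ne.symm hz1z3) t1 iV iZ ht1 (ht1.trans hClt) he1 hVedge hZedge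
              hz1uw.1 hz1uw.2 tru trw (htrutrw.trans hgt) hetru hgt hetrw
    -- dispatch on which of o1, o2 is off the cycle
    by_cases hb1 : o1 ∈ w0.support
    · by_cases hb2 : o2 ∈ w0.support
      · exact not_two_nbrs w0 hw0 hoff hb1 hb2 ho12 hvo1 hvo2
      · exact key o1 o2 hvo1 hvo2 ho12 ho1z3 ho2z3 hb2
    · exact key o2 o1 hvo2 hvo1 ho12.symm ho2z3 ho1z3 hb1
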